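/- Let D_• be a chain complex of abelian groups and γ_• : D_• → D_• a chain endomorphism (commuting with the differentials). Let C_• = coker(1 − γ)_• and C'_• = ker(1 − γ)_• be the induced quotient and sub chain complexes, and let T_• be the mapping cone of the chain map (1 − γ) : D_• → D_•. Then there is a long exact sequence ··· → H_{p−1}(C'_•) → H_p(T_•) → H_p(C_•) → H_{p−2}(C'_•) → H_{p−1}(T_•) → ···. -/

import Mathlib

open CategoryTheory CategoryTheory.Limits

/-- Homology in homological (chain) degree `p` of a cochain complex, i.e. its
cohomology in degree `-p`. -/
noncomputable abbrev Hdeg (K : CochainComplex (ModuleCat ℤ) ℤ) (p : ℤ) : ModuleCat ℤ :=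
  K.homology (-p)

noncomputable section Aux4

variable {A : Type*} [Category A] [Abelian A] {X Y : A} (f : X ⟶ Y)

/-- SES `0 → ker f → X → im f → 0`. -/
@[reducible] def auxS₂ : ShortComplex A :=
  ShortComplex.mk (kernel.ι f) (factorThruImage f)
    (by rw [← cancel_mono (image.ι f), Category.assoc, image.fac, zero_comp,
        kernel.condition])

lemma aux_hS₂ : (auxS₂ f).ShortExact where
  exact := ShortComplex.exact_of_f_is_kernel _ (KernelFork.IsLimit.ofι _ _
    (fun k hk => kernel.lift f k (by
      dsimp only [auxS₂] at hk
      exact (congrArg (k ≫ ·) (image.fac f)).symm.trans ((Category.assoc k (factorThruImage f) (image.ι f)).symm.trans ((congrArg (· ≫ image.ι f) hk).trans zero_comp))))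
    (fun k hk => by dsimp only [auxS₂]; simp)
    (fun k hk m hm => by
      dsimp only [auxS₂] at hm ⊢
      rw [← cancel_mono (kernel.ι f), hm]; simp))
  mono_f := by dsimp only [auxS₂]; infer_instance
  epi_g := by dsimp only [auxS₂]; infer_instance

/-- SES `0 → im f → Y → coker f → 0`. -/
@[reducible] def auxS₃ : ShortComplex A :=
  ShortComplex.mk (image.ι f) (cokernel.π f)
    (by rw [← cancel_epi (factorThruImage f), image.fac_assoc, cokernel.condition,
        comp_zero])

lemma aux_hS₃ : (auxS₃ f).ShortExact where
  exact := ShortComplex.exact_of_g_is_cokernel _ (CokernelCofork.IsColimit.ofπ _ _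
    (fun k hk => cokernel.desc f k (by
      dsimp only [auxS₃] at hk
      exact (congrArg (· ≫ k) (image.fac f)).symm.trans ((Category.assoc (factorThruImage f) (image.ι f) k).trans ((congrArg (factorThruImage f ≫ ·) hk).trans comp_zero))))
    (fun k hk => by dsimp only [auxS₃]; simp)
    (fun k hk m hm => by
      dsimp only [auxS₃] at hm ⊢
      rw [← cancel_epi (cokernel.π f), hm]; simp))
  mono_f := by dsimp only [auxS₃]; infer_instance
  epi_g := by dsimp only [auxS₃]; infer_instance

def auxHomToLin {M N : ModuleCat ℤ} (f : M ⟶ N) : M →ₗ[ℤ] N :=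
  f.hom

@[simp] lemma auxHomToLin_apply {M N : ModuleCat ℤ} (f : M ⟶ N) (x : M) :
    auxHomToLin f x = f x := rfl

lemma aux_hom_inv_apply {M N : ModuleCat ℤ} (e : M ≅ N) (x : M) : e.inv (e.hom x) = x := by
  change (e.hom ≫ e.inv) x = x
  rw [e.hom_inv_id]; rfl

lemma aux_inv_hom_apply {M N : ModuleCat ℤ} (e : M ≅ N) (y : N) : e.hom (e.inv y) = y := by
  change (e.inv ≫ e.hom) y = y
  rw [e.inv_hom_id]; rfl

lemma aux_conj_exact {A B C A' B' C' : ModuleCat ℤ} {u : A ⟶ B} {v : B ⟶ C}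
    (h : Function.Exact u v) (eA : A ≅ A') (eB : B ≅ B') (eC : C ≅ C') :
    Function.Exact (eA.inv ≫ u ≫ eB.hom : A' ⟶ B') (eB.inv ≫ v ≫ eC.hom : B' ⟶ C') := by
  intro y
  constructor
  · intro hy
    have hv : v (eB.inv y) = 0 := by
      have h0 : eC.hom (v (eB.inv y)) = 0 := hy
      have h1 := congrArg eC.inv h0
      rwa [aux_hom_inv_apply, map_zero] at h1
    obtain ⟨x, hx⟩ := (h (eB.inv y)).mp hv
    refine ⟨eA.hom x, ?_⟩
    show eB.hom (u (eA.inv (eA.hom x))) = y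
    rw [aux_hom_inv_apply, hx, aux_inv_hom_apply]
  · rintro ⟨x', hx'⟩
    subst hx'
    show eC.hom (v (eB.inv (eB.hom (u (eA.inv x'))))) = 0
    rw [aux_hom_inv_apply, h.apply_apply_eq_zero, map_zero]

end Aux4

open Pretriangulated in
/-- for a chain complex `D` of abelian groups with a chain endomorphism `γ`,
with `C = coker (1 - γ)`, `C' = ker (1 - γ)` and `T` the mapping cone of `1 - γ`, there is a
long exact sequence `⋯ → H_{p-1}(C') → H_p(T) → H_p(C) → H_{p-2}(C') → H_{p-1}(T) → ⋯`. -/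
theorem stmt_4 (D : CochainComplex (ModuleCat ℤ) ℤ) (γ : D ⟶ D) :
    ∃ (a : ∀ p : ℤ, Hdeg (kernel (𝟙 D - γ)) (p - 1) →ₗ[ℤ]
              Hdeg (CochainComplex.mappingCone (𝟙 D - γ)) p)
      (b : ∀ p : ℤ, Hdeg (CochainComplex.mappingCone (𝟙 D - γ)) p →ₗ[ℤ]
              Hdeg (cokernel (𝟙 D - γ)) p)
      (c : ∀ p : ℤ, Hdeg (cokernel (𝟙 D - γ)) p →ₗ[ℤ]
              Hdeg (kernel (𝟙 D - γ)) (p - 1 - 1)),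
      ∀ p : ℤ,
        Function.Exact (a p) (b p) ∧
        Function.Exact (b p) (c p) ∧
        Function.Exact (c p) (a (p - 1)) := by
  have hDC : HasDerivedCategory (ModuleCat ℤ) := HasDerivedCategory.standard _
  set f : D ⟶ D := 𝟙 D - γ with hfdef
  have h₁₂ := Pretriangulated.rot_of_distTriang _
    (DerivedCategory.triangleOfSES_distinguished (aux_hS₂ f))
  have h₂₃ := DerivedCategory.triangleOfSES_distinguished (aux_hS₃ f)
  have h₁₃ : DerivedCategory.Q.mapTriangle.obj (CochainComplex.mappingCone.triangle f)
      ∈ distTriang (DerivedCategory (ModuleCat ℤ)) := by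
    rw [DerivedCategory.mem_distTriang_iff]
    exact ⟨_, _, f, ⟨Iso.refl _⟩⟩
  have comm : DerivedCategory.Q.map (factorThruImage f) ≫ DerivedCategory.Q.map (image.ι f)
      = DerivedCategory.Q.map f := by rw [← Functor.map_comp, image.fac]
  have O := Triangulated.someOctahedron comm h₁₂ h₂₃ h₁₃
  set T' : Pretriangulated.Triangle (DerivedCategory (ModuleCat ℤ)) :=
    Pretriangulated.Triangle.mk O.m₁ O.m₃ _ with hT'
  have hT'mem : T' ∈ distTriang _ := O.mem
  -- isomorphisms identifying homologies
  let E₂ : ∀ q : ℤ, (DerivedCategory.homologyFunctor (ModuleCat ℤ) (-q)).obj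
        (DerivedCategory.Q.obj (CochainComplex.mappingCone f)) ≅
        (CochainComplex.mappingCone f).homology (-q) :=
    fun q => (DerivedCategory.homologyFunctorFactors (ModuleCat ℤ) (-q)).app
      (CochainComplex.mappingCone f)
  let E₃ : ∀ q : ℤ, (DerivedCategory.homologyFunctor (ModuleCat ℤ) (-q)).obj
        (DerivedCategory.Q.obj (cokernel f)) ≅ (cokernel f).homology (-q) :=
    fun q => (DerivedCategory.homologyFunctorFactors (ModuleCat ℤ) (-q)).app (cokernel f)
  let E₁ : ∀ q : ℤ, (DerivedCategory.homologyFunctor (ModuleCat ℤ) (-q)).obj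
        ((DerivedCategory.Q.obj (kernel f))⟦(1:ℤ)⟧) ≅ (kernel f).homology (-(q-1)) :=
    fun q => ((DerivedCategory.homologyFunctor (ModuleCat ℤ) 0).shiftIso 1 (-q) (-(q-1))
        (by omega)).app (DerivedCategory.Q.obj (kernel f)) ≪≫
      (DerivedCategory.homologyFunctorFactors (ModuleCat ℤ) (-(q-1))).app (kernel f)
  refine ⟨fun p => auxHomToLin ((E₁ p).inv ≫ (DerivedCategory.homologyFunctor (ModuleCat ℤ) (-p)).map O.m₁
      ≫ (E₂ p).hom),
    fun p => auxHomToLin ((E₂ p).inv ≫ (DerivedCategory.homologyFunctor (ModuleCat ℤ) (-p)).map O.m₃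
      ≫ (E₃ p).hom),
    fun p => auxHomToLin ((E₃ p).inv ≫ DerivedCategory.HomologySequence.δ T' (-p) (-(p-1)) (by omega)
      ≫ (E₁ (p-1)).hom),
    fun p => ?_⟩
  refine ⟨?_, ?_, ?_⟩
  · exact aux_conj_exact
      ((ShortComplex.ShortExact.moduleCat_exact_iff_function_exact _).mp
        (DerivedCategory.HomologySequence.exact₂ T' hT'mem (-p)))
      (E₁ p) (E₂ p) (E₃ p)
  · exact aux_conj_exact
      ((ShortComplex.ShortExact.moduleCat_exact_iff_function_exact _).mp
        (DerivedCategory.HomologySequence.exact₃ T' hT'mem (-p) (-(p-1)) (by omega)))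
      (E₂ p) (E₃ p) (E₁ (p-1))
  · exact aux_conj_exact
      ((ShortComplex.ShortExact.moduleCat_exact_iff_function_exact _).mp
        (DerivedCategory.HomologySequence.exact₁ T' hT'mem (-p) (-(p-1)) (by omega)))
      (E₃ p) (E₁ (p-1)) (E₂ (p-1))
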